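/- Let m ≥ 1, σ > 0 and let p(x) = (1/(σ√(2π))) · exp(−x²/(2σ²)) be the Gaussian density with standard deviation σ, with cumulative distribution function F. Let u_1,…,u_m and u'_1,…,u'_m be real numbers with |u_i − u'_i| ≤ 1 for every i, and for each i define P_i = ∫_ℝ p(r) · ∏_{j≠i} F(u_i + r − u_j) dr and P'_i = ∫_ℝ p(r) · ∏_{j≠i} F(u'_i + r − u'_j) dr. Let δ be a real number with 0 < δ ≤ m and set ε = 2/σ² + (2/σ)·√(2·log(m/δ)). Then ∑_{i=1}^m max(P_i − e^ε · P'_i, 0) ≤ δ. -/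

import Mathlib

open MeasureTheory Real

lemma gauss_pdf_eq (σ : ℝ) (hσ : 0 < σ) (x : ℝ) :
    (1 / (σ * Real.sqrt (2 * Real.pi))) * Real.exp (-x ^ 2 / (2 * σ ^ 2))
      = (1 / (σ * Real.sqrt (2 * Real.pi))) * Real.exp (-(1 / (2 * σ ^ 2)) * x ^ 2) := by
  congr 1
  rw [neg_div, neg_mul, div_mul_eq_mul_div, one_mul]

lemma gauss_pdf_integrable (σ : ℝ) (hσ : 0 < σ) :
    Integrable (fun x : ℝ =>
      (1 / (σ * Real.sqrt (2 * Real.pi))) * Real.exp (-x ^ 2 / (2 * σ ^ 2))) := by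
  have h : Integrable (fun x : ℝ =>
      (1 / (σ * Real.sqrt (2 * Real.pi))) * Real.exp (-(1 / (2 * σ ^ 2)) * x ^ 2)) :=
    (integrable_exp_neg_mul_sq (by positivity)).const_mul _
  exact h.congr (Filter.Eventually.of_forall fun x => (gauss_pdf_eq σ hσ x).symm)

lemma gauss_pdf_integral (σ : ℝ) (hσ : 0 < σ) :
    ∫ x : ℝ, (1 / (σ * Real.sqrt (2 * Real.pi))) * Real.exp (-x ^ 2 / (2 * σ ^ 2)) = 1 := by
  simp_rw [gauss_pdf_eq σ hσ]
  rw [integral_const_mul, integral_gaussian]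
  have h1 : Real.pi / (1 / (2 * σ ^ 2)) = 2 * Real.pi * σ ^ 2 := by
    field_simp
  rw [h1, show (2 : ℝ) * Real.pi * σ ^ 2 = σ ^ 2 * (2 * Real.pi) by ring,
    Real.sqrt_mul (sq_nonneg σ), Real.sqrt_sq hσ.le]
  have h2 : (0:ℝ) < σ * Real.sqrt (2 * Real.pi) := by
    have := Real.sqrt_pos.mpr (by positivity : (0:ℝ) < 2 * Real.pi)
    positivity
  field_simp

/-- Corollary 3.4: (ε,δ)-DP guarantee for Report Noisy Max with Gaussian noise. -/
theorem rnm_gaussian_eps_delta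
    (m : ℕ) (hm : 1 ≤ m) (σ : ℝ) (hσ : 0 < σ)
    (p : ℝ → ℝ)
    (hp : ∀ x, p x = (1 / (σ * Real.sqrt (2 * Real.pi))) * Real.exp (-x ^ 2 / (2 * σ ^ 2)))
    (F : ℝ → ℝ) (hF : ∀ u, F u = ∫ t in Set.Iio u, p t)
    (u u' : Fin m → ℝ) (hu : ∀ i, |u i - u' i| ≤ 1)
    (P P' : Fin m → ℝ)
    (hP : ∀ i, P i = ∫ r, p r * ∏ j ∈ Finset.univ.erase i, F (u i + r - u j))
    (hP' : ∀ i, P' i = ∫ r, p r * ∏ j ∈ Finset.univ.erase i, F (u' i + r - u' j))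
    (δ : ℝ) (hδ_pos : 0 < δ) (hδ_le : δ ≤ m)
    (ε : ℝ) (hε : ε = 2 / σ ^ 2 + (2 / σ) * Real.sqrt (2 * Real.log (m / δ))) :
    ∑ i, max (P i - Real.exp ε * P' i) 0 ≤ δ := by
  have hσ2 : (0:ℝ) < σ ^ 2 := by positivity
  have hm0 : (0:ℝ) < m := by exact_mod_cast Nat.lt_of_lt_of_le Nat.zero_lt_one hm
  -- basic facts about p
  have hpnn : ∀ x, 0 ≤ p x := by
    intro x; rw [hp]
    have := Real.sqrt_nonneg (2 * Real.pi)
    positivity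
  have hpint : Integrable p := by
    have := gauss_pdf_integrable σ hσ
    exact this.congr (Filter.Eventually.of_forall fun x => (hp x).symm)
  have hptot : ∫ x, p x = 1 := by
    simp_rw [hp]; exact gauss_pdf_integral σ hσ
  -- basic facts about F
  have hFmono : Monotone F := by
    intro a b hab
    rw [hF, hF]
    exact setIntegral_mono_set hpint.integrableOn
      (Filter.Eventually.of_forall hpnn)
      (HasSubset.Subset.eventuallyLE (Set.Iio_subset_Iio hab))
  have hFnn : ∀ x, 0 ≤ F x := fun x => by
    rw [hF]; exact setIntegral_nonneg measurableSet_Iio fun y _ => hpnn y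
  have hFle1 : ∀ x, F x ≤ 1 := fun x => by
    rw [hF, ← hptot]
    exact setIntegral_le_integral hpint (Filter.Eventually.of_forall hpnn)
  have hFmeas : Measurable F := hFmono.measurable
  -- the threshold t
  set t : ℝ := σ * Real.sqrt (2 * Real.log (m / δ)) with ht
  have hmδ : (1:ℝ) ≤ m / δ := (one_le_div hδ_pos).mpr hδ_le
  have hlog : 0 ≤ Real.log (m / δ) := Real.log_nonneg hmδ
  have ht0 : 0 ≤ t := by positivity
  have ht2 : t ^ 2 = 2 * σ ^ 2 * Real.log (m / δ) := by
    rw [ht, mul_pow, Real.sq_sqrt (by linarith)]; ring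
  have htδ : Real.exp (-t ^ 2 / (2 * σ ^ 2)) = δ / m := by
    rw [show -t ^ 2 / (2 * σ ^ 2) = -(t ^ 2 / (2 * σ ^ 2)) from neg_div _ _, ht2,
      show 2 * σ ^ 2 * Real.log (m / δ) / (2 * σ ^ 2) = Real.log (m / δ) by field_simp]
    rw [Real.exp_neg, Real.exp_log (by positivity), inv_div]
  have hεt : ε = (2 * t + 2) / σ ^ 2 := by
    rw [hε, ht]
    field_simp
    ring
  have hδm0 : (0:ℝ) ≤ δ / m := by positivity
  -- key per-coordinate bound
  have key : ∀ i : Fin m, P i ≤ Real.exp ε * P' i + δ / m := by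
    intro i
    set G : ℝ → ℝ := fun s => ∏ j ∈ Finset.univ.erase i, F (u' i + s - u' j) with hG
    have hGmeas : Measurable G := by
      apply Finset.measurable_prod
      intro j _
      exact hFmeas.comp (by fun_prop)
    have hGnn : ∀ s, 0 ≤ G s := fun s => Finset.prod_nonneg fun j _ => hFnn _
    have hGle1 : ∀ s, G s ≤ 1 := fun s =>
      Finset.prod_le_one (fun j _ => hFnn _) fun j _ => hFle1 _
    have hmulint : ∀ (H : ℝ → ℝ), Measurable H → (∀ s, 0 ≤ H s) → (∀ s, H s ≤ 1) →
        ∀ a : ℝ, Integrable (fun s => p (s - a) * H s) := by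
      intro H hHm hHnn hHle a
      have hpa : Integrable (fun s : ℝ => p (s - a)) := hpint.comp_sub_right a
      have := hpa.bdd_mul hHm.aestronglyMeasurable
        (c := 1) (Filter.Eventually.of_forall fun x => by rw [Real.norm_eq_abs, abs_of_nonneg (hHnn x)]; exact hHle x)
      exact this.congr (Filter.Eventually.of_forall fun x => mul_comm _ _)
    have hintG : ∀ a : ℝ, Integrable (fun s => p (s - a) * G s) :=
      hmulint G hGmeas hGnn hGle1
    have hintG0 : Integrable (fun s => p s * G s) := by
      have := hintG 0
      simpa using this
    have hintG2' : Integrable (fun r => p r * G (r + 2)) := by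
      have := (hintG 2).comp_add_right 2
      simpa using this
    -- the original product (with u)
    have hG0meas : Measurable fun s : ℝ => ∏ j ∈ Finset.univ.erase i, F (u i + s - u j) := by
      apply Finset.measurable_prod
      intro j _
      exact hFmeas.comp (by fun_prop)
    have hintG0' : Integrable (fun r => p r * ∏ j ∈ Finset.univ.erase i, F (u i + r - u j)) := by
      have := hmulint _ hG0meas
        (fun s => Finset.prod_nonneg fun j _ => hFnn _)
        (fun s => Finset.prod_le_one (fun j _ => hFnn _) fun j _ => hFle1 _) 0
      simpa using this
    -- Step 1: P i ≤ ∫ p r * G (r + 2)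
    have step1 : P i ≤ ∫ r, p r * G (r + 2) := by
      rw [hP i]
      apply integral_mono hintG0' hintG2'
      intro r
      simp only [hG]
      apply mul_le_mul_of_nonneg_left _ (hpnn r)
      apply Finset.prod_le_prod (fun j _ => hFnn _)
      intro j _
      apply hFmono
      have h1 := abs_le.mp (hu i)
      have h2 := abs_le.mp (hu j)
      linarith [h1.1, h1.2, h2.1, h2.2]
    -- Step 2: change of variables
    have step2 : ∫ r, p r * G (r + 2) = ∫ s, p (s - 2) * G s := by
      have := integral_add_right_eq_self (μ := volume) (fun s => p (s - 2) * G s) 2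
      simpa using this
    -- Step 3: split the integral at t + 2
    have step3 : ∫ s, p (s - 2) * G s
        = (∫ s in Set.Iic (t + 2), p (s - 2) * G s)
          + ∫ s in Set.Ioi (t + 2), p (s - 2) * G s := by
      rw [← intervalIntegral.integral_Iic_add_Ioi (hintG 2).integrableOn (hintG 2).integrableOn]
    -- bound on Iic
    have boundA : (∫ s in Set.Iic (t + 2), p (s - 2) * G s) ≤ Real.exp ε * P' i := by
      have hA1 : (∫ s in Set.Iic (t + 2), p (s - 2) * G s)
          ≤ ∫ s in Set.Iic (t + 2), Real.exp ε * (p s * G s) := by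
        apply setIntegral_mono_on (hintG 2).integrableOn (hintG0.const_mul _).integrableOn
          measurableSet_Iic
        intro s hs
        have hs' : s ≤ t + 2 := Set.mem_Iic.mp hs
        rw [← mul_assoc]
        apply mul_le_mul_of_nonneg_right _ (hGnn s)
        rw [hp, hp, ← mul_assoc, mul_comm (Real.exp ε), mul_assoc, ← Real.exp_add]
        apply mul_le_mul_of_nonneg_left _ (by positivity)
        apply Real.exp_le_exp.mpr
        rw [hεt]
        have hdiff : ((2 * t + 2) / σ ^ 2 + -s ^ 2 / (2 * σ ^ 2))
            - (-(s - 2) ^ 2 / (2 * σ ^ 2)) = (2 * (t + 2 - s)) / σ ^ 2 := by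
          field_simp; ring
        have h0 : 0 ≤ (2 * (t + 2 - s)) / σ ^ 2 :=
          div_nonneg (by linarith) hσ2.le
        linarith
      have hA2 : (∫ s in Set.Iic (t + 2), Real.exp ε * (p s * G s)) ≤ Real.exp ε * P' i := by
        rw [integral_const_mul]
        have hPG : P' i = ∫ s, p s * G s := by
          rw [hP' i]
        rw [hPG]
        exact mul_le_mul_of_nonneg_left
          (setIntegral_le_integral hintG0
            (Filter.Eventually.of_forall fun s => mul_nonneg (hpnn s) (hGnn s)))
          (Real.exp_pos ε).le
      exact hA1.trans hA2
    -- bound on Ioi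
    have boundB : (∫ s in Set.Ioi (t + 2), p (s - 2) * G s) ≤ δ / m := by
      have hint3 : Integrable (fun s : ℝ => δ / m * p (s - (2 + t))) :=
        (hpint.comp_sub_right (2 + t)).const_mul _
      have hB1 : (∫ s in Set.Ioi (t + 2), p (s - 2) * G s)
          ≤ ∫ s in Set.Ioi (t + 2), δ / m * p (s - (2 + t)) := by
        apply setIntegral_mono_on (hintG 2).integrableOn hint3.integrableOn measurableSet_Ioi
        intro s hs
        have hs' : t + 2 < s := Set.mem_Ioi.mp hs
        calc p (s - 2) * G s ≤ p (s - 2) :=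
              mul_le_of_le_one_right (hpnn _) (hGle1 s)
          _ ≤ δ / m * p (s - (2 + t)) := by
              rw [← htδ, hp (s - 2), hp (s - (2 + t)), ← mul_assoc,
                mul_comm (Real.exp (-t ^ 2 / (2 * σ ^ 2))), mul_assoc, ← Real.exp_add]
              apply mul_le_mul_of_nonneg_left _ (by positivity)
              apply Real.exp_le_exp.mpr
              have hdiff : (-t ^ 2 / (2 * σ ^ 2) + -(s - (2 + t)) ^ 2 / (2 * σ ^ 2))
                  - (-(s - 2) ^ 2 / (2 * σ ^ 2)) = (2 * t * (s - 2 - t)) / (2 * σ ^ 2) := by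
                field_simp; ring
              have h0 : 0 ≤ (2 * t * (s - 2 - t)) / (2 * σ ^ 2) :=
                div_nonneg (mul_nonneg (by linarith) (by linarith)) (by positivity)
              linarith
      have hB2 : (∫ s in Set.Ioi (t + 2), δ / m * p (s - (2 + t))) ≤ δ / m := by
        have := setIntegral_le_integral (s := Set.Ioi (t + 2)) hint3
          (Filter.Eventually.of_forall fun s => mul_nonneg hδm0 (hpnn _))
        refine this.trans ?_
        rw [integral_const_mul]
        have : ∫ s : ℝ, p (s - (2 + t)) = 1 := by
          rw [integral_sub_right_eq_self p (2 + t), hptot]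
        rw [this, mul_one]
      exact hB1.trans hB2
    calc P i ≤ ∫ r, p r * G (r + 2) := step1
      _ = ∫ s, p (s - 2) * G s := step2
      _ = _ + _ := step3
      _ ≤ Real.exp ε * P' i + δ / m := add_le_add boundA boundB
  -- sum up
  have hmax : ∀ i : Fin m, max (P i - Real.exp ε * P' i) 0 ≤ δ / m := fun i =>
    max_le (by linarith [key i]) hδm0
  calc ∑ i, max (P i - Real.exp ε * P' i) 0 ≤ ∑ _i : Fin m, δ / m :=
        Finset.sum_le_sum fun i _ => hmax i
    _ = m * (δ / m) := by
        rw [Finset.sum_const, Finset.card_univ, Fintype.card_fin, nsmul_eq_mul]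
    _ = δ := by field_simp
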